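/- arXiv:1601.07146 — 3 statements merged into one kernel-verified Lean document; each statement's English description precedes it below -/
import Mathlib

section
/- With notation as above (combinatorial galleries for a sequence of simple reflections), define the equivalence relation γ ∼_α δ iff γ_i = δ_i for all i with β_i(γ) ≠ ±α. Then the set M_α(γ) depends only on the ∼_α-equivalence class of γ; that is, if γ ∼_α δ then M_α(γ) = M_α(δ). -/
/-- The Weyl-group element of a combinatorial gallery entry: `s i` if the entry
is `true`, identity otherwise. -/
def galW {W : Type*} [Group W] {r : ℕ} (s : Fin r → W) (γ : Fin r → Bool) : Fin r → W :=
  fun i => cond (γ i) (s i) 1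

/-- The prefix product `γ^i = γ₁⋯γᵢ` of a combinatorial gallery. -/
def prefW {W : Type*} [Group W] {r : ℕ} (s : Fin r → W) (γ : Fin r → Bool) (i : ℕ) : W :=
  ((List.ofFn (galW s γ)).take i).prod

/-- The wall `β_i(γ) = γ^i(-α_i)` (here `i : Fin r` labels the `(i+1)`-st wall). -/
def wallβ {W V : Type*} [Group W] [AddCommGroup V] [DistribMulAction W V] {r : ℕ}
    (s : Fin r → W) (α : Fin r → V) (γ : Fin r → Bool) (i : Fin r) : V :=
  prefW s γ (i.1 + 1) • (-(α i))

/-- The wall `β̃_i(γ) = γ^{i-1}(-α_i)`. -/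
def wallβt {W V : Type*} [Group W] [AddCommGroup V] [DistribMulAction W V] {r : ℕ}
    (s : Fin r → W) (α : Fin r → V) (γ : Fin r → Bool) (i : Fin r) : V :=
  prefW s γ i.1 • (-(α i))

/-- `M_α(γ) = {i : β_i(γ) = ±α}`. -/
def Mset {W V : Type*} [Group W] [AddCommGroup V] [DistribMulAction W V] [DecidableEq V]
    {r : ℕ} (s : Fin r → W) (α : Fin r → V) (a : V) (γ : Fin r → Bool) : Finset (Fin r) :=
  Finset.univ.filter fun i => wallβ s α γ i = a ∨ wallβ s α γ i = -a

/-- `J_α(γ) = {i : β_i(γ) = α}`. -/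
def Jset {W V : Type*} [Group W] [AddCommGroup V] [DistribMulAction W V] [DecidableEq V]
    {r : ℕ} (s : Fin r → W) (α : Fin r → V) (a : V) (γ : Fin r → Bool) : Finset (Fin r) :=
  Finset.univ.filter fun i => wallβ s α γ i = a

/-- `D_α(γ) = {i : β̃_i(γ) = α}`. -/
def Dset {W V : Type*} [Group W] [AddCommGroup V] [DistribMulAction W V] [DecidableEq V]
    {r : ℕ} (s : Fin r → W) (α : Fin r → V) (a : V) (γ : Fin r → Bool) : Finset (Fin r) :=
  Finset.univ.filter fun i => wallβt s α γ i = a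


/-- The equivalence relation `∼_α`: `γ ∼_α δ` iff `γ_i = δ_i` unless `β_i(γ) = ±α`. -/
def simRel {W V : Type*} [Group W] [AddCommGroup V] [DistribMulAction W V]
    {r : ℕ} (s : Fin r → W) (α : Fin r → V) (a : V) (γ δ : Fin r → Bool) : Prop :=
  ∀ i : Fin r, (wallβ s α γ i ≠ a ∧ wallβ s α γ i ≠ -a) → γ i = δ i

/-- The set `M_α(γ)` only depends on the `∼_α`-equivalence class of `γ`. -/
theorem stmt4 {W V : Type*} [Group W] [AddCommGroup V] [DistribMulAction W V] [DecidableEq V]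
    {r : ℕ} (s : Fin r → W) (α : Fin r → V) (a : V) (sref : V → W)
    (hinv : ∀ i, s i * s i = 1)
    (hsi : ∀ i, s i = sref (α i))
    (hsa : sref a • a = -a)
    (hinvol : ∀ v : V, sref a • sref a • v = v)
    (hneg : ∀ v : V, sref (-v) = sref v)
    (hconj : ∀ (w : W) (v : V), sref (w • v) = w * sref v * w⁻¹)
    (γ δ : Fin r → Bool) (h : simRel s α a γ δ) :
    Mset s α a γ = Mset s α a δ := by
  have pref_succ : ∀ (η : Fin r → Bool) (i : ℕ) (hi : i < r),
      prefW s η (i+1) = prefW s η i * galW s η ⟨i, hi⟩ := by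
    intro η i hi
    unfold prefW
    rw [List.take_succ, List.prod_append]
    congr 1
    rw [List.getElem?_eq_getElem (by simpa using hi)]
    simp
  have key : ∀ i, i ≤ r →
      (∀ v : V, prefW s δ i • v = prefW s γ i • v) ∨
      (∀ v : V, prefW s δ i • v = sref a • prefW s γ i • v) := by
    intro i
    induction i with
    | zero => intro _; left; intro v; simp [prefW]
    | succ i ih =>
      intro hi1
      have hi : i < r := hi1
      by_cases hb : γ ⟨i, hi⟩ = δ ⟨i, hi⟩
      · have hg : galW s δ ⟨i, hi⟩ = galW s γ ⟨i, hi⟩ := by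
          simp only [galW]; rw [hb]
        rcases ih (le_of_lt hi) with k | k
        · left; intro v
          rw [pref_succ δ i hi, pref_succ γ i hi, hg, mul_smul, mul_smul, k]
        · right; intro v
          rw [pref_succ δ i hi, pref_succ γ i hi, hg, mul_smul, mul_smul, k]
      · have hw : wallβ s α γ ⟨i, hi⟩ = a ∨ wallβ s α γ ⟨i, hi⟩ = -a := by
          by_contra hc
          push_neg at hc
          exact hb (h ⟨i, hi⟩ hc)
        have hg : galW s δ ⟨i, hi⟩ = galW s γ ⟨i, hi⟩ * s ⟨i, hi⟩ := by
          cases hγ : γ ⟨i, hi⟩ <;> cases hδ : δ ⟨i, hi⟩ <;>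
            simp_all [galW, hinv ⟨i, hi⟩]
        have hwα : prefW s γ (i+1) • α ⟨i, hi⟩ = -(wallβ s α γ ⟨i, hi⟩) := by
          simp [wallβ, smul_neg]
        have hα : sref (prefW s γ (i+1) • α ⟨i, hi⟩) = sref a := by
          rcases hw with hw | hw
          · rw [hwα, hw, hneg]
          · rw [hwα, hw, neg_neg]
        have hw' : prefW s γ (i+1) * s ⟨i, hi⟩ = sref a * prefW s γ (i+1) := by
          rw [hsi]
          calc prefW s γ (i+1) * sref (α ⟨i, hi⟩)
              = sref (prefW s γ (i+1) • α ⟨i, hi⟩) * prefW s γ (i+1) := by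
                rw [hconj]; group
            _ = sref a * prefW s γ (i+1) := by rw [hα]
        have e1 : ∀ v : V, prefW s δ (i+1) • v =
            prefW s δ i • (galW s γ ⟨i, hi⟩ • (s ⟨i, hi⟩ • v)) := by
          intro v
          rw [pref_succ δ i hi, hg, mul_smul, mul_smul]
        have e2 : ∀ w : V, prefW s γ i • (galW s γ ⟨i, hi⟩ • (s ⟨i, hi⟩ • w)) =
            sref a • prefW s γ (i+1) • w := by
          intro w
          have hq : prefW s γ i * galW s γ ⟨i, hi⟩ * s ⟨i, hi⟩ =
              sref a * prefW s γ (i+1) := by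
            rw [← pref_succ γ i hi, hw']
          calc prefW s γ i • (galW s γ ⟨i, hi⟩ • (s ⟨i, hi⟩ • w))
              = (prefW s γ i * galW s γ ⟨i, hi⟩ * s ⟨i, hi⟩) • w := by
                simp only [mul_smul]
            _ = (sref a * prefW s γ (i+1)) • w := by rw [hq]
            _ = sref a • prefW s γ (i+1) • w := mul_smul _ _ _
        rcases ih (le_of_lt hi) with k | k
        · right; intro v
          rw [e1, k, e2]
        · left; intro v
          rw [e1, k, e2, hinvol]
  ext i
  simp only [Mset, Finset.mem_filter, Finset.mem_univ, true_and]
  rcases key (i.1+1) i.2 with k | k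
  · have hd : wallβ s α δ i = wallβ s α γ i := by
      simp only [wallβ]; rw [k]
    rw [hd]
  · have hd : wallβ s α δ i = sref a • wallβ s α γ i := by
      simp only [wallβ]; rw [k]
    have hd2 : wallβ s α γ i = sref a • wallβ s α δ i := by
      rw [hd, hinvol]
    have ta : sref a • a = -a := hsa
    have tna : sref a • (-a : V) = a := by rw [smul_neg, hsa, neg_neg]
    constructor
    · rintro (hg | hg)
      · right; rw [hd, hg, ta]
      · left; rw [hd, hg, tna]
    · rintro (hg | hg)
      · right; rw [hd2, hg, ta]
      · left; rw [hd2, hg, tna]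
end

section
/- Let Γ²_ℓ = {(δ₁,...,δ_ℓ) : δ_i ∈ {e, s}} be the set of combinatorial galleries of length ℓ for the Weyl group W = {e, s} of type A₁, with J(δ) = {j : δ₁⋯δ_j = s}. Let M_α(γ) = {i₁ < ⋯ < i_ℓ} for a gallery γ in a larger Weyl group and positive root α, and define the embedding of index sets i_J = {i_j : j ∈ J} for J ⊆ {1,...,ℓ}. Define v(δ) ∈ Γ by replacing, in the minimal representative γ_min of the ∼_α-class of γ, the entries at positions in M_α(γ) so that the prefix products get multiplied on the left by s_α exactly at the positions i_j with j ∈ J(δ). Then J_α(v(δ)) = i_{J(δ)} for every δ ∈ Γ²_ℓ. -/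
/-- The prefix product of a rank-one (type `A₁`) gallery `ε` of length `ℓ`, recorded as
a parity: `sPref ε p = true` iff `ε¹⋯ε^p = s`, i.e. iff the number of entries equal to
`s` among the first `p` entries is odd. -/
def sPref {ℓ : ℕ} (ε : Fin ℓ → Bool) (p : ℕ) : Bool :=
  decide (Odd ((Finset.univ.filter fun j : Fin ℓ => j.1 < p ∧ ε j = true)).card)

/-- Equation (11) of the paper: under Härterich's parametrization `v = v^α_γ ∘ ι` of the
`∼_α`-equivalence class of `γ` by rank-one galleries `ε` of length `ℓ = |M_α(γ)|`
(the prefix products of `v` are `g_{k(p)}·γ_min^p` where `g_j = s_α` iff the `j`-th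
prefix of `ε` equals `s`, and `k(p)` counts the walls `i_j ≤ p`), one has
`J_α(v(ε)) = i_{J(ε)}`, the image of `J(ε)` under the enumeration `m` of `M_α(γ_min)`. -/
theorem stmt9 {W V : Type*} [Group W] [AddCommGroup V] [DistribMulAction W V] [DecidableEq V]
    {r : ℕ} (s : Fin r → W) (α : Fin r → V) (a : V) (sref : V → W)
    (hinv : ∀ i, s i * s i = 1)
    (hsi : ∀ i, s i = sref (α i))
    (hsa : sref a • a = -a)
    (hinvol : ∀ v : V, sref a • sref a • v = v)
    (hneg : ∀ v : V, sref (-v) = sref v)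
    (hconj : ∀ (w : W) (v : V), sref (w • v) = w * sref v * w⁻¹)
    (γmin : Fin r → Bool) (hmin : Jset s α a γmin = ∅)
    {ℓ : ℕ} (m : Fin ℓ → Fin r) (hmono : StrictMono m)
    (hrange : Finset.univ.image m = Mset s α a γmin)
    (ε : Fin ℓ → Bool) (v : Fin r → Bool)
    (hsim : simRel s α a γmin v)
    (hv : ∀ p : ℕ, p ≤ r →
      prefW s v p =
        (cond (sPref ε ((Finset.univ.filter fun j : Fin ℓ => (m j).1 + 1 ≤ p).card))
          (sref a) 1) * prefW s γmin p) :
    Jset s α a v =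
      (Finset.univ.filter fun j : Fin ℓ => sPref ε (j.1 + 1) = true).image m := by

  have hJmin : ∀ i : Fin r, wallβ s α γmin i ≠ a := by
    intro i hi
    have hmem : i ∈ Jset s α a γmin := by simp [Jset, hi]
    rw [hmin] at hmem
    exact absurd hmem (Finset.notMem_empty i)
  have key : ∀ i : Fin r, wallβ s α v i =
      (cond (sPref ε ((Finset.univ.filter fun j : Fin ℓ => (m j).1 + 1 ≤ i.1 + 1).card))
        (sref a) 1) • wallβ s α γmin i := by
    intro i
    have h := hv (i.1 + 1) i.2
    simp only [wallβ, prefW] at h ⊢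
    rw [h, mul_smul]
  ext i
  simp only [Jset, Finset.mem_filter, Finset.mem_univ, true_and, Finset.mem_image]
  by_cases hM : i ∈ Mset s α a γmin
  · have hmem : i ∈ Finset.univ.image m := hrange ▸ hM
    obtain ⟨j₀, -, hj₀⟩ := Finset.mem_image.mp hmem
    have hwm : wallβ s α γmin i = -a := by
      rcases (Finset.mem_filter.mp hM).2 with h | h
      · exact absurd h (hJmin i)
      · exact h
    have hna : -a ≠ a := by rw [← hwm]; exact hJmin i
    have hcount : (Finset.univ.filter fun j : Fin ℓ => (m j).1 + 1 ≤ i.1 + 1).card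
        = j₀.1 + 1 := by
      have heq : (Finset.univ.filter fun j : Fin ℓ => (m j).1 + 1 ≤ i.1 + 1)
          = Finset.Iic j₀ := by
        ext j
        simp only [Finset.mem_filter, Finset.mem_univ, true_and, Finset.mem_Iic,
          Nat.succ_le_succ_iff, ← hj₀]
        rw [show ((m j).1 ≤ (m j₀).1 ↔ m j ≤ m j₀) from Iff.rfl, hmono.le_iff_le]
      rw [heq, Fin.card_Iic]
    rw [key i, hcount, hwm]
    constructor
    · intro h
      refine ⟨j₀, ?_, hj₀⟩
      by_contra hs
      rw [Bool.not_eq_true] at hs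
      rw [hs] at h
      simp only [cond_false, one_smul] at h
      exact hna h
    · rintro ⟨j, hsj, hj⟩
      have hjj : j = j₀ := hmono.injective (hj.trans hj₀.symm)
      subst hjj
      rw [hsj]
      simp only [cond_true, smul_neg, hsa, neg_neg]
  · constructor
    · intro h
      exfalso
      rw [key i] at h
      rcases Bool.eq_false_or_eq_true
          (sPref ε ((Finset.univ.filter fun j : Fin ℓ => (m j).1 + 1 ≤ i.1 + 1).card))
          with hs | hs
      · rw [hs] at h
        simp only [cond_true] at h
        have h2 := hinvol (wallβ s α γmin i)
        rw [h, hsa] at h2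
        exact hM (Finset.mem_filter.mpr ⟨Finset.mem_univ i, Or.inr h2.symm⟩)
      · rw [hs] at h
        simp only [cond_false, one_smul] at h
        exact hM (Finset.mem_filter.mpr ⟨Finset.mem_univ i, Or.inl h⟩)
    · rintro ⟨j, -, hj⟩
      exact absurd (hj ▸ (hrange ▸ Finset.mem_image_of_mem m (Finset.mem_univ j) :
        m j ∈ Mset s α a γmin)) hM
end

section
/- Let S be a commutative graded ring, Γ a finite set, and let H = Map(Γ, S) with pointwise operations. Fix r > 0 and elements β_r(γ) ∈ S for each γ ∈ Γ indexed via Γ = Γ' × {e, t} (t a formal second value). Define Δ : Map(Γ', S) → Map(Γ, S) by (Δf')(γ', ε) = f'(γ') and ∇_t : Map(Γ', S) → Map(Γ, S) by (∇_t f')(γ', ε) = β_r(γ', ε)·f'(γ') if ε = t and 0 otherwise. Then Δ and ∇_t are S-linear maps, and if B' is an S-linearly independent subset of Map(Γ', S) and all β_r(γ', t) are non-zero-divisors in S, then Δ(B') ∪ ∇_t(B') is S-linearly independent in Map(Γ, S). -/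
/-- The copy operator `Δ : Map(Γ', S) → Map(Γ' × {e,t}, S)`, `(Δf)(γ', ε) = f(γ')`. -/
def copyOp {S : Type*} {Γ' : Type*} (f : Γ' → S) : Γ' × Bool → S :=
  fun p => f p.1

/-- The concentration operator `∇_t`, `(∇_t f)(γ', ε) = β(γ', t)·f(γ')` if `ε = t`
(encoded as `true`) and `0` otherwise. -/
def concOp {S : Type*} [Mul S] [Zero S] {Γ' : Type*} (β : Γ' × Bool → S) (f : Γ' → S) :
    Γ' × Bool → S :=
  fun p => if p.2 = true then β (p.1, true) * f p.1 else 0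

/-- `copyOp` as a linear map. -/
def copyLin (S : Type*) [CommRing S] (Γ' : Type*) : (Γ' → S) →ₗ[S] (Γ' × Bool → S) where
  toFun := copyOp
  map_add' f g := by funext p; simp [copyOp]
  map_smul' c f := by funext p; simp [copyOp]

/-- `concOp` as a linear map. -/
def concLin {S : Type*} [CommRing S] {Γ' : Type*} (β : Γ' × Bool → S) :
    (Γ' → S) →ₗ[S] (Γ' × Bool → S) where
  toFun := concOp β
  map_add' f g := by
    funext p; simp only [concOp, Pi.add_apply]
    split <;> ring
  map_smul' c f := by
    funext p; simp only [concOp, Pi.smul_apply, RingHom.id_apply, smul_eq_mul]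
    split <;> ring

/-- The operators of copy and concentration are `S`-linear, and they transform an
`S`-linearly independent family `B'` of functions on `Γ'` into the `S`-linearly
independent family `Δ(B') ∪ ∇_t(B')` of functions on `Γ = Γ' × {e,t}`, provided all the
elements `β(γ', t)` are non-zero-divisors of `S`. -/
theorem stmt11 {S : Type*} [CommRing S] {Γ' : Type*} (β : Γ' × Bool → S)
    (hβ : ∀ g : Γ', β (g, true) ∈ nonZeroDivisors S)
    (B' : Set (Γ' → S))
    (hB' : LinearIndependent S (fun b : B' => (b : Γ' → S))) :
    (∀ (c : S) (f g : Γ' → S), copyOp (c • f + g) = c • copyOp f + copyOp g) ∧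
    (∀ (c : S) (f g : Γ' → S), concOp β (c • f + g) = c • concOp β f + concOp β g) ∧
    LinearIndependent S
      (Sum.elim (fun b : B' => copyOp (b : Γ' → S))
        (fun b : B' => concOp β (b : Γ' → S))) := by
  refine ⟨?_, ?_, ?_⟩
  · intro c f g
    have := (copyLin S Γ').map_add (c • f) g
    have h2 := (copyLin S Γ').map_smul c f
    simpa [copyLin, h2] using this
  · intro c f g
    have := (concLin β).map_add (c • f) g
    have h2 := (concLin β).map_smul c f
    simpa [concLin, h2] using this
  · have hCker : LinearMap.ker (copyLin S Γ') = ⊥ := by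
      rw [LinearMap.ker_eq_bot']
      intro f hf
      funext x
      have := congrFun hf (x, false)
      simpa [copyLin, copyOp] using this
    have hNker : LinearMap.ker (concLin (S := S) β) = ⊥ := by
      rw [LinearMap.ker_eq_bot']
      intro f hf
      funext x
      have := congrFun hf (x, true)
      simp only [concLin, concOp, LinearMap.coe_mk, AddHom.coe_mk, Pi.zero_apply,
        if_pos rfl] at this
      exact (hβ x).2 (f x) (by rwa [mul_comm] at this)
    have hC := hB'.map' (copyLin S Γ') hCker
    have hN := hB'.map' (concLin (S := S) β) hNker
    have hdisj : Disjoint (LinearMap.range (copyLin S Γ'))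
        (LinearMap.range (concLin (S := S) β)) := by
      rw [Submodule.disjoint_def]
      intro x hx hx'
      obtain ⟨f, rfl⟩ := hx
      obtain ⟨g, hg⟩ := hx'
      funext p
      have hfalse : f p.1 = 0 := by
        have := congrFun hg (p.1, false)
        simpa [copyLin, concLin, copyOp, concOp] using this.symm
      simp [copyLin, copyOp, hfalse]
    refine LinearIndependent.sum_type ?_ ?_ ?_
    · exact hC
    · exact hN
    · apply Disjoint.mono _ _ hdisj
      · rw [Submodule.span_le]
        rintro _ ⟨b, rfl⟩
        exact ⟨b, rfl⟩
      · rw [Submodule.span_le]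
        rintro _ ⟨b, rfl⟩
        exact ⟨b, rfl⟩
end
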